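/- arXiv:2401.02393 — 4 statements merged into one kernel-verified Lean document; each statement's English description precedes it below -/
import Mathlib

section
/- Let d₁ be a natural number, d = 2·d₁, η : Fin d₁ → ℝ, O a real orthogonal d×d matrix (Oᵀ * O = 1), and Λ = Oᵀ * Σ(η) * O. Suppose h : Fin d → ℝ → ℝ satisfies: h i (0) = 0 for all i; h (2k) = h (2k+1) as functions for all k < d₁; and for every i and t, HasDerivAt (h i) (2·(h i t)² − (η ⌊i/2⌋)²/8) t. Suppose g : ℝ → ℝ satisfies g(0) = 1 and HasDerivAt g (g t · ∑_{i} h i t) t for every t. Define f : ℝ → (Fin d → ℝ) → ℂ by f t w = g(t) · exp( ∑_{i} h i t · ((O.mulVec w) i)² ) (a real number coerced to ℂ). Then f 0 w = 1 for all w, and for all (t, w): −∂f/∂t (t,w) + (1/2)·∑_{j} ∂²f/∂wⱼ² (t,w) + (Complex.I/2)·∑_{j} ((Λᵀ.mulVec w) j) · ∂f/∂wⱼ (t,w) − (1/8)·( w ⬝ᵥ ((Λ*Λᵀ).mulVec w) ) · f(t,w) = 0. -/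
open Matrix

/-- The canonical skew block matrix `Σ(η)` of size `d × d` determined by `η : Fin d₁ → ℝ`:
its only nonzero entries are `Σ(η) (2k) (2k+1) = -η k` and `Σ(η) (2k+1) (2k) = η k`
for `k < d₁` (0-based indices). -/
def canonicalSkew (d d₁ : ℕ) (η : Fin d₁ → ℝ) : Matrix (Fin d) (Fin d) ℝ :=
  Matrix.of fun i j =>
    if h : i.val / 2 < d₁ ∧ i.val / 2 = j.val / 2 then
      if i.val % 2 = 0 ∧ j.val % 2 = 1 then -η ⟨i.val / 2, h.1⟩
      else if i.val % 2 = 1 ∧ j.val % 2 = 0 then η ⟨i.val / 2, h.1⟩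
      else 0
    else 0

/-- For `d = 2·d₁` and `k : Fin d₁`, the index `2k` viewed in `Fin (2d₁)`. -/
def idx0 {d₁ : ℕ} (k : Fin d₁) : Fin (2 * d₁) :=
  ⟨2 * k.val, by have := k.isLt; omega⟩

/-- For `d = 2·d₁` and `k : Fin d₁`, the index `2k+1` viewed in `Fin (2d₁)`. -/
def idx1 {d₁ : ℕ} (k : Fin d₁) : Fin (2 * d₁) :=
  ⟨2 * k.val + 1, by have := k.isLt; omega⟩

/-- The map `Fin (2d₁) → Fin d₁` sending `2k` and `2k+1` to `k` (i.e. `i ↦ ⌊i/2⌋`). -/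
def half {d₁ : ℕ} (i : Fin (2 * d₁)) : Fin d₁ :=
  ⟨i.val / 2, by have := i.isLt; omega⟩

def partner {d₁ : ℕ} (i : Fin (2 * d₁)) : Fin (2 * d₁) :=
  ⟨if i.val % 2 = 0 then i.val + 1 else i.val - 1, by have := i.isLt; split <;> omega⟩

noncomputable def sgn {d₁ : ℕ} (i : Fin (2 * d₁)) : ℝ := if i.val % 2 = 0 then -1 else 1

lemma partner_val {d₁ : ℕ} (i : Fin (2 * d₁)) :
    (partner i).val = if i.val % 2 = 0 then i.val + 1 else i.val - 1 := rfl

lemma canonicalSkew_apply {d₁ : ℕ} (η : Fin d₁ → ℝ) (i k : Fin (2 * d₁)) :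
    canonicalSkew (2 * d₁) d₁ η i k = if k = partner i then sgn i * η (half i) else 0 := by
  have hi := i.isLt; have hk := k.isLt
  simp only [canonicalSkew, Matrix.of_apply]
  by_cases hpar : i.val % 2 = 0
  · by_cases hkp : k.val = i.val + 1
    · have hkpart : k = partner i := Fin.ext (by rw [partner_val, if_pos hpar]; exact hkp)
      have h1 : i.val / 2 < d₁ ∧ i.val / 2 = k.val / 2 := ⟨by omega, by omega⟩
      rw [if_pos hkpart, dif_pos h1, if_pos ⟨hpar, by omega⟩]
      have h2 : (⟨i.val / 2, h1.1⟩ : Fin d₁) = half i := rfl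
      rw [h2, sgn, if_pos hpar]; ring
    · have hkpart : k ≠ partner i := fun hc => hkp (by rw [congrArg Fin.val hc, partner_val, if_pos hpar])
      rw [if_neg hkpart]
      by_cases h1 : i.val / 2 < d₁ ∧ i.val / 2 = k.val / 2
      · rw [dif_pos h1, if_neg (fun hc : _ ∧ _ => by omega), if_neg (fun hc : _ ∧ _ => by omega)]
      · rw [dif_neg h1]
  · by_cases hkp : k.val = i.val - 1
    · have hkpart : k = partner i := Fin.ext (by rw [partner_val, if_neg hpar]; exact hkp)
      have h1 : i.val / 2 < d₁ ∧ i.val / 2 = k.val / 2 := ⟨by omega, by omega⟩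
      rw [if_pos hkpart, dif_pos h1, if_neg (fun hc : _ ∧ _ => by omega),
        if_pos ⟨by omega, by omega⟩]
      have h2 : (⟨i.val / 2, h1.1⟩ : Fin d₁) = half i := rfl
      rw [h2, sgn, if_neg hpar]; ring
    · have hkpart : k ≠ partner i := fun hc => hkp (by rw [congrArg Fin.val hc, partner_val, if_neg hpar])
      rw [if_neg hkpart]
      by_cases h1 : i.val / 2 < d₁ ∧ i.val / 2 = k.val / 2
      · rw [dif_pos h1, if_neg (fun hc : _ ∧ _ => by omega), if_neg (fun hc : _ ∧ _ => by omega)]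
      · rw [dif_neg h1]

lemma partner_injective {d₁ : ℕ} : Function.Injective (partner (d₁ := d₁)) := by
  intro i j hij
  have hv := congrArg Fin.val hij
  rw [partner_val, partner_val] at hv
  have hi := i.isLt; have hj := j.isLt
  apply Fin.ext
  by_cases a : i.val % 2 = 0 <;> by_cases b : j.val % 2 = 0 <;>
    simp only [a, b, if_true, if_false, if_pos, if_neg] at hv <;> omega

lemma sgn_mul_self {d₁ : ℕ} (i : Fin (2 * d₁)) : sgn i * sgn i = 1 := by
  rw [sgn]; split <;> norm_num

lemma skew_mul_skew_transpose {d₁ : ℕ} (η : Fin d₁ → ℝ) :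
    canonicalSkew (2 * d₁) d₁ η * (canonicalSkew (2 * d₁) d₁ η)ᵀ
      = Matrix.diagonal fun i => (η (half i)) ^ 2 := by
  ext i j
  simp only [Matrix.mul_apply, Matrix.transpose_apply, canonicalSkew_apply]
  have hstep : ∀ k ∈ Finset.univ, (if k = partner i then sgn i * η (half i) else 0) *
      (if k = partner j then sgn j * η (half j) else 0)
      = if k = partner i then (if k = partner j then (sgn i * η (half i)) * (sgn j * η (half j)) else 0) else 0 := by
    intro k _
    by_cases h1 : k = partner i <;> by_cases h2 : k = partner j <;> simp [h1, h2]
  rw [Finset.sum_congr rfl hstep, Finset.sum_ite_eq' Finset.univ (partner i)]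
  simp only [Finset.mem_univ, if_true]
  by_cases hij : i = j
  · subst hij
    rw [if_pos rfl, Matrix.diagonal_apply_eq]
    have : sgn i * η (half i) * (sgn i * η (half i)) = (sgn i * sgn i) * (η (half i))^2 := by ring
    rw [this, sgn_mul_self, one_mul]
  · rw [if_neg (fun hp => hij (partner_injective hp)), Matrix.diagonal_apply_ne _ hij]

lemma skew_mulVec {d₁ : ℕ} (η : Fin d₁ → ℝ) (v : Fin (2 * d₁) → ℝ) (i : Fin (2 * d₁)) :
    (canonicalSkew (2 * d₁) d₁ η).mulVec v i = sgn i * η (half i) * v (partner i) := by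
  simp only [Matrix.mulVec, dotProduct, canonicalSkew_apply]
  rw [show (∑ k, (if k = partner i then sgn i * η (half i) else 0) * v k)
      = ∑ k, (if k = partner i then sgn i * η (half i) * v k else 0) from
    Finset.sum_congr rfl (fun k _ => by by_cases h1 : k = partner i <;> simp [h1]),
    Finset.sum_ite_eq' Finset.univ (partner i) (fun k => sgn i * η (half i) * v k)]
  simp

lemma sum_pair {d₁ : ℕ} {M : Type*} [AddCommMonoid M] (F : Fin (2 * d₁) → M) :
    ∑ i, F i = ∑ k : Fin d₁, (F (idx0 k) + F (idx1 k)) := by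
  have hbij : Function.Bijective (fun p : Fin d₁ × Fin 2 =>
      (⟨2 * p.1.val + p.2.val, by have := p.1.isLt; have := p.2.isLt; omega⟩ : Fin (2 * d₁))) := by
    rw [Fintype.bijective_iff_injective_and_card]
    constructor
    · intro p q hpq
      have hv := congrArg Fin.val hpq
      simp only at hv
      have h1 := p.2.isLt; have h2 := q.2.isLt
      have : p.1.val = q.1.val ∧ p.2.val = q.2.val := by omega
      exact Prod.ext (Fin.ext this.1) (Fin.ext this.2)
    · simp [Fintype.card_prod]; ring
  rw [← Fintype.sum_bijective _ hbij _ F (fun p => rfl)]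
  rw [Fintype.sum_prod_type]
  refine Finset.sum_congr rfl fun k _ => ?_
  rw [Fin.sum_univ_two]
  rfl

lemma partner_idx0 {d₁ : ℕ} (k : Fin d₁) : partner (idx0 k) = idx1 k := by
  apply Fin.ext; rw [partner_val]; simp [idx0, idx1]
lemma partner_idx1 {d₁ : ℕ} (k : Fin d₁) : partner (idx1 k) = idx0 k := by
  apply Fin.ext; rw [partner_val]; show (if (2 * k.val + 1) % 2 = 0 then 2 * k.val + 1 + 1 else 2 * k.val + 1 - 1) = 2 * k.val
  rw [if_neg (by omega)]; omega
lemma half_idx0 {d₁ : ℕ} (k : Fin d₁) : half (idx0 k) = k := by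
  apply Fin.ext; simp only [half, idx0]; omega
lemma half_idx1 {d₁ : ℕ} (k : Fin d₁) : half (idx1 k) = k := by
  apply Fin.ext; simp only [half, idx1]; omega
lemma sgn_idx0 {d₁ : ℕ} (k : Fin d₁) : sgn (idx0 k) = -1 := by
  rw [sgn, if_pos (by simp only [idx0]; omega)]
lemma sgn_idx1 {d₁ : ℕ} (k : Fin d₁) : sgn (idx1 k) = 1 := by
  rw [sgn, if_neg (by simp only [idx1]; omega)]

/-- If the `h i` solve the Riccati ODEs `h_i' = 2h_i² − η_{⌊i/2⌋}²/8` with `h_i(0)=0`,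
paired on the 2×2 blocks, and `g' = g·∑ᵢ hᵢ` with `g(0)=1`, then the ansatz
`f(t,w) = g(t)·exp(∑ᵢ hᵢ(t)(Ow)ᵢ²)` satisfies `f(0,·) = 1` and the PDE
`−∂ₜf + ½Δf + (i/2)∑ⱼ(wᵀΛ)ⱼ∂ⱼf − (1/8)(wᵀΛΛᵀw)f = 0`. -/
theorem ansatz_solves_levy_pde (d₁ : ℕ) (η : Fin d₁ → ℝ)
    (O : Matrix (Fin (2 * d₁)) (Fin (2 * d₁)) ℝ) (hO : Oᵀ * O = 1)
    (Λ : Matrix (Fin (2 * d₁)) (Fin (2 * d₁)) ℝ)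
    (hΛ : Λ = Oᵀ * canonicalSkew (2 * d₁) d₁ η * O)
    (h : Fin (2 * d₁) → ℝ → ℝ)
    (h0 : ∀ i, h i 0 = 0)
    (hpair : ∀ k : Fin d₁, h (idx0 k) = h (idx1 k))
    (hderiv : ∀ i t, HasDerivAt (h i) (2 * (h i t) ^ 2 - (η (half i)) ^ 2 / 8) t)
    (g : ℝ → ℝ) (hg0 : g 0 = 1)
    (hgderiv : ∀ t, HasDerivAt g (g t * ∑ i, h i t) t)
    (f : ℝ → (Fin (2 * d₁) → ℝ) → ℂ)
    (hf : ∀ t w, f t w =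
      ((g t * Real.exp (∑ i, h i t * (O.mulVec w i) ^ 2) : ℝ) : ℂ)) :
    (∀ w, f 0 w = 1) ∧
    ∀ (t : ℝ) (w : Fin (2 * d₁) → ℝ),
      -(deriv (fun s => f s w) t)
      + (1 / 2) * ∑ j, deriv (deriv (fun s => f t (Function.update w j s))) (w j)
      + (Complex.I / 2) * ∑ j, ((Λᵀ.mulVec w j : ℝ) : ℂ) *
          deriv (fun s => f t (Function.update w j s)) (w j)
      - (1 / 8) * ((w ⬝ᵥ ((Λ * Λᵀ).mulVec w) : ℝ) : ℂ) * f t w = 0 := by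
  have hOO : O * Oᵀ = 1 := mul_eq_one_comm.mp hO
  have hΛT : Λᵀ = Oᵀ * (canonicalSkew (2 * d₁) d₁ η)ᵀ * O := by
    rw [hΛ]
    simp [Matrix.transpose_mul, Matrix.mul_assoc]
  constructor
  · intro w
    rw [hf]
    simp [h0, hg0]
  intro t w
  set u : Fin (2 * d₁) → ℝ := O.mulVec w with hu
  set E : ℝ := Real.exp (∑ i, h i t * u i ^ 2) with hE
  have hupd : ∀ (j : Fin (2 * d₁)) (s : ℝ) (i : Fin (2 * d₁)),
      O.mulVec (Function.update w j s) i = u i + O i j * (s - w j) := by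
    intro j s i
    rw [hu]
    simp only [Matrix.mulVec, dotProduct]
    rw [show (∑ k, O i k * Function.update w j s k)
        = ∑ k, (O i k * w k + if k = j then O i k * (s - w j) else 0) from
      Finset.sum_congr rfl (fun k _ => by
        by_cases hk : k = j
        · subst hk; rw [Function.update_self, if_pos rfl]; ring
        · rw [Function.update_of_ne hk, if_neg hk]; ring)]
    rw [Finset.sum_add_distrib, Finset.sum_ite_eq' Finset.univ j (fun k => O i k * (s - w j))]
    simp
  have haff : ∀ (j i : Fin (2 * d₁)) (s : ℝ),
      HasDerivAt (fun s : ℝ => u i + O i j * (s - w j)) (O i j) s := by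
    intro j i s
    simpa using (((hasDerivAt_id s).sub_const (w j)).const_mul (O i j)).const_add (u i)
  have hP : ∀ (j : Fin (2 * d₁)) (s : ℝ),
      HasDerivAt (fun s : ℝ => ∑ i, h i t * (u i + O i j * (s - w j)) ^ 2)
        (∑ i, 2 * h i t * (u i + O i j * (s - w j)) * O i j) s := by
    intro j s
    have hsum := HasDerivAt.fun_sum (u := Finset.univ)
      (fun i _ => (((haff j i s).pow 2).const_mul (h i t)))
    exact hsum.congr_deriv (Finset.sum_congr rfl (fun i _ => by push_cast; ring))
  have hG : ∀ (j : Fin (2 * d₁)) (s : ℝ),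
      HasDerivAt (fun s : ℝ => g t * Real.exp (∑ i, h i t * (u i + O i j * (s - w j)) ^ 2))
        (g t * Real.exp (∑ i, h i t * (u i + O i j * (s - w j)) ^ 2)
          * (∑ i, 2 * h i t * (u i + O i j * (s - w j)) * O i j)) s := by
    intro j s
    have hh := ((hP j s).exp).const_mul (g t)
    exact hh.congr_deriv (by ring)
  have hfe : ∀ j : Fin (2 * d₁), (fun s => f t (Function.update w j s))
      = fun s : ℝ => ((g t * Real.exp (∑ i, h i t * (u i + O i j * (s - w j)) ^ 2) : ℝ) : ℂ) := by
    intro j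
    funext s
    rw [hf]
    norm_cast
    rw [show (∑ i, h i t * ((O.mulVec (Function.update w j s)) i) ^ 2)
        = ∑ i, h i t * (u i + O i j * (s - w j)) ^ 2 from
      Finset.sum_congr rfl fun i _ => by rw [hupd]]
  have hD1' : ∀ (j : Fin (2 * d₁)), deriv (fun s => f t (Function.update w j s))
      = fun s : ℝ => ((g t * Real.exp (∑ i, h i t * (u i + O i j * (s - w j)) ^ 2)
          * (∑ i, 2 * h i t * (u i + O i j * (s - w j)) * O i j) : ℝ) : ℂ) := by
    intro j
    funext s
    rw [hfe j]
    exact ((hG j s).ofReal_comp).deriv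
  have simp0 : ∀ (i j : Fin (2 * d₁)), u i + O i j * (w j - w j) = u i := by
    intro i j; ring
  have hE0 : ∀ j : Fin (2 * d₁), (∑ i, h i t * (u i + O i j * (w j - w j)) ^ 2)
      = ∑ i, h i t * u i ^ 2 := fun j => Finset.sum_congr rfl fun i _ => by rw [simp0]
  have hB0 : ∀ j : Fin (2 * d₁), (∑ i, 2 * h i t * (u i + O i j * (w j - w j)) * O i j)
      = ∑ i, 2 * h i t * u i * O i j := fun j => Finset.sum_congr rfl fun i _ => by rw [simp0]
  have hD1 : ∀ (j : Fin (2 * d₁)), deriv (fun s => f t (Function.update w j s)) (w j)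
      = ((g t * E * (∑ i, 2 * h i t * u i * O i j) : ℝ) : ℂ) := by
    intro j
    rw [hD1' j]
    simp only
    rw [hE0 j, hB0 j, ← hE]
  have hA : ∀ (j : Fin (2 * d₁)) (s : ℝ),
      HasDerivAt (fun s : ℝ => ∑ i, 2 * h i t * (u i + O i j * (s - w j)) * O i j)
        (∑ i, 2 * h i t * O i j * O i j) s := by
    intro j s
    have hsum := HasDerivAt.fun_sum (u := Finset.univ)
      (fun i _ => (((haff j i s).const_mul (2 * h i t)).mul_const (O i j)))
    exact hsum
  have hD2 : ∀ (j : Fin (2 * d₁)), deriv (deriv (fun s => f t (Function.update w j s))) (w j)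
      = ((g t * E * ((∑ i, 2 * h i t * u i * O i j) ^ 2 + ∑ i, 2 * h i t * O i j * O i j) : ℝ) : ℂ) := by
    intro j
    rw [hD1' j]
    have hm : HasDerivAt (fun s : ℝ => g t * Real.exp (∑ i, h i t * (u i + O i j * (s - w j)) ^ 2)
        * ∑ i, 2 * h i t * (u i + O i j * (s - w j)) * O i j) _ (w j) := (hG j (w j)).mul (hA j (w j))
    rw [(hm.ofReal_comp).deriv, hE0 j, hB0 j, ← hE]
    push_cast
    ring
  have hT : deriv (fun s => f s w) t
      = ((g t * E * ((∑ i, h i t) + ∑ i, (2 * (h i t) ^ 2 - (η (half i)) ^ 2 / 8) * u i ^ 2) : ℝ) : ℂ) := by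
    have h1 : (fun s => f s w) = fun s : ℝ => ((g s * Real.exp (∑ i, h i s * u i ^ 2) : ℝ) : ℂ) := by
      funext s
      rw [hf, ← hu]
    rw [h1]
    have hS : HasDerivAt (fun s : ℝ => ∑ i, h i s * u i ^ 2)
        (∑ i, (2 * (h i t) ^ 2 - (η (half i)) ^ 2 / 8) * u i ^ 2) t :=
      HasDerivAt.fun_sum (fun i _ => (hderiv i t).mul_const (u i ^ 2))
    have h2 : HasDerivAt (fun s : ℝ => g s * Real.exp (∑ i, h i s * u i ^ 2))
        (g t * E * ((∑ i, h i t) + ∑ i, (2 * (h i t) ^ 2 - (η (half i)) ^ 2 / 8) * u i ^ 2)) t := by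
      have hh := (hgderiv t).mul hS.exp
      refine hh.congr_deriv ?_
      rw [hE]
      ring
    rw [(h2.ofReal_comp).deriv]
  have hff : f t w = ((g t * E : ℝ) : ℂ) := by
    rw [hf, ← hu, ← hE]
  -- real identity 2 : the drift term vanishes
  have key2 : (∑ j, (Λᵀ.mulVec w j) * (g t * E * (∑ i, 2 * h i t * u i * O i j)) : ℝ) = 0 := by
    have hBv : ∀ j, (∑ i, 2 * h i t * u i * O i j) = ((fun i => 2 * h i t * u i) ᵥ* O) j := by
      intro j; simp [Matrix.vecMul, dotProduct]
    have hmain : (Λᵀ.mulVec w) ⬝ᵥ ((fun i => 2 * h i t * u i) ᵥ* O) = 0 := by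
      rw [dotProduct_comm, dotProduct_mulVec, vecMul_vecMul]
      have hOΛ : O * Λᵀ = (canonicalSkew (2 * d₁) d₁ η)ᵀ * O := by
        rw [hΛT, ← Matrix.mul_assoc, ← Matrix.mul_assoc, hOO, Matrix.one_mul]
      rw [hOΛ, ← vecMul_vecMul, ← dotProduct_mulVec,
        vecMul_transpose (canonicalSkew (2 * d₁) d₁ η) (fun i => 2 * h i t * u i), ← hu]
      unfold dotProduct
      rw [show (∑ i, (canonicalSkew (2 * d₁) d₁ η *ᵥ fun i => 2 * h i t * u i) i * u i)
          = ∑ i, sgn i * η (half i) * (2 * h (partner i) t * u (partner i)) * u i from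
        Finset.sum_congr rfl fun i _ => by rw [skew_mulVec]]
      rw [sum_pair (fun i => sgn i * η (half i) * (2 * h (partner i) t * u (partner i)) * u i)]
      apply Finset.sum_eq_zero
      intro k _
      rw [sgn_idx0, sgn_idx1, half_idx0, half_idx1, partner_idx0, partner_idx1, hpair k]
      ring
    calc (∑ j, (Λᵀ.mulVec w j) * (g t * E * (∑ i, 2 * h i t * u i * O i j)))
        = (g t * E) * ((Λᵀ.mulVec w) ⬝ᵥ ((fun i => 2 * h i t * u i) ᵥ* O)) := by
          unfold dotProduct
          rw [Finset.mul_sum]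
          exact Finset.sum_congr rfl fun j _ => by rw [hBv j]; ring
      _ = 0 := by rw [hmain, mul_zero]
  -- sum of squares of B
  have hBsq : (∑ j, (∑ i, 2 * h i t * u i * O i j) ^ 2) = ∑ i, (2 * h i t * u i) ^ 2 := by
    have hBv : ∀ j, (∑ i, 2 * h i t * u i * O i j) = ((fun i => 2 * h i t * u i) ᵥ* O) j := by
      intro j; simp [Matrix.vecMul, dotProduct]
    calc ∑ j, (∑ i, 2 * h i t * u i * O i j) ^ 2
        = ((fun i => 2 * h i t * u i) ᵥ* O) ⬝ᵥ ((fun i => 2 * h i t * u i) ᵥ* O) := by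
          unfold dotProduct
          exact Finset.sum_congr rfl fun j _ => by rw [hBv j]; ring
      _ = (fun i : Fin (2 * d₁) => 2 * h i t * u i) ⬝ᵥ (fun i => 2 * h i t * u i) := by
          rw [← mulVec_transpose, dotProduct_mulVec, mulVec_transpose, vecMul_vecMul, hOO,
            vecMul_one]
      _ = ∑ i, (2 * h i t * u i) ^ 2 := by
          unfold dotProduct
          exact Finset.sum_congr rfl fun i _ => by ring
  have hCsum : (∑ j, ∑ i, 2 * h i t * O i j * O i j) = 2 * ∑ i, h i t := by
    rw [Finset.sum_comm]
    calc ∑ i, ∑ j, 2 * h i t * O i j * O i j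
        = ∑ i : Fin (2 * d₁), 2 * h i t * ((O * Oᵀ) i i) := by
          refine Finset.sum_congr rfl fun i _ => ?_
          rw [Matrix.mul_apply, Finset.mul_sum]
          exact Finset.sum_congr rfl fun j _ => by rw [Matrix.transpose_apply]; ring
      _ = 2 * ∑ i, h i t := by
          rw [hOO]
          simp [Matrix.one_apply_eq, Finset.mul_sum]
  have hQ : (w ⬝ᵥ ((Λ * Λᵀ).mulVec w)) = ∑ i, (η (half i)) ^ 2 * u i ^ 2 := by
    have hΛΛ : Λ * Λᵀ = Oᵀ * Matrix.diagonal (fun i => (η (half i)) ^ 2) * O := by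
      rw [hΛT, hΛ, ← skew_mul_skew_transpose η]
      simp only [Matrix.mul_assoc]
      rw [← Matrix.mul_assoc O Oᵀ, hOO, Matrix.one_mul]
    rw [hΛΛ, ← Matrix.mulVec_mulVec, ← Matrix.mulVec_mulVec, dotProduct_mulVec,
      vecMul_transpose, ← hu]
    unfold dotProduct
    refine Finset.sum_congr rfl fun i _ => ?_
    rw [Matrix.mulVec_diagonal]
    ring
  have hS2 : (∑ i, (2 * (h i t) ^ 2 - (η (half i)) ^ 2 / 8) * u i ^ 2)
      = (1 / 2) * (∑ i, (2 * h i t * u i) ^ 2) - (1 / 8) * ∑ i, (η (half i)) ^ 2 * u i ^ 2 := by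
    rw [Finset.mul_sum, Finset.mul_sum, ← Finset.sum_sub_distrib]
    exact Finset.sum_congr rfl fun i _ => by ring
  have key1 : (-(g t * E * ((∑ i, h i t) + ∑ i, (2 * (h i t) ^ 2 - (η (half i)) ^ 2 / 8) * u i ^ 2))
      + 1 / 2 * (∑ j, g t * E * ((∑ i, 2 * h i t * u i * O i j) ^ 2 + ∑ i, 2 * h i t * O i j * O i j))
      - 1 / 8 * ((w ⬝ᵥ ((Λ * Λᵀ).mulVec w)) * (g t * E)) : ℝ) = 0 := by
    have hsplit : (∑ j, g t * E * ((∑ i, 2 * h i t * u i * O i j) ^ 2 + ∑ i, 2 * h i t * O i j * O i j))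
        = g t * E * ((∑ j, (∑ i, 2 * h i t * u i * O i j) ^ 2) + ∑ j, ∑ i, 2 * h i t * O i j * O i j) := by
      rw [← Finset.mul_sum, Finset.sum_add_distrib]
    rw [hsplit, hBsq, hCsum, hQ, hS2]
    ring
  have E1 : ((-(g t * E * ((∑ i, h i t) + ∑ i, (2 * (h i t) ^ 2 - (η (half i)) ^ 2 / 8) * u i ^ 2))
      + 1 / 2 * (∑ j, g t * E * ((∑ i, 2 * h i t * u i * O i j) ^ 2 + ∑ i, 2 * h i t * O i j * O i j))
      - 1 / 8 * ((w ⬝ᵥ ((Λ * Λᵀ).mulVec w)) * (g t * E)) : ℝ) : ℂ) = 0 := by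
    exact_mod_cast key1
  have E2 : (((∑ j, (Λᵀ.mulVec w j) * (g t * E * (∑ i, 2 * h i t * u i * O i j)) : ℝ)) : ℂ) = 0 := by
    exact_mod_cast key2
  rw [hT, hff]
  simp only [hD1, hD2]
  push_cast at E1 E2 ⊢
  linear_combination E1 + (Complex.I / 2) * E2
end

section
/- Let d₁ be a natural number, d = 2·d₁, η : Fin d₁ → ℝ with η k > 0 for all k, O a real orthogonal d×d matrix (Oᵀ * O = 1), and Λ = Oᵀ * Σ(η) * O. Define 𝓛 : ℝ → (Fin d → ℝ) → ℂ by 𝓛 t w = ( ∏_{k<d₁} (cosh(η k · t/2))⁻¹ ) · exp( − ∑_{k<d₁} (η k /4) · ( ((O.mulVec w)(2k))² + ((O.mulVec w)(2k+1))² ) · tanh(η k · t/2) ) (a real number coerced to ℂ). Then 𝓛 0 w = 1 for all w, and 𝓛 satisfies, for all (t, w) ∈ ℝ × (Fin d → ℝ): −∂𝓛/∂t (t,w) + (1/2)·∑_{j} ∂²𝓛/∂wⱼ² (t,w) + (Complex.I/2)·∑_{j} ((Λᵀ.mulVec w) j) · ∂𝓛/∂wⱼ (t,w) − (1/8)·(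 w ⬝ᵥ ((Λ*Λᵀ).mulVec w) ) · 𝓛(t,w) = 0. -/
open Matrix

def pairEquiv (d₁ : ℕ) : Fin d₁ × Fin 2 ≃ Fin (2 * d₁) where
  toFun x := ⟨2 * x.1.val + x.2.val, by have := x.1.isLt; have := x.2.isLt; omega⟩
  invFun p := (⟨p.val / 2, by have := p.isLt; omega⟩, ⟨p.val % 2, by omega⟩)
  left_inv := by
    rintro ⟨⟨k, hk⟩, ⟨b, hb⟩⟩
    have h1 : (2 * k + b) / 2 = k := by omega
    have h2 : (2 * k + b) % 2 = b := by omega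
    simp [h1, h2]
  right_inv := by
    rintro ⟨p, hp⟩
    simp only [Fin.mk.injEq]
    omega

lemma sum_split {d₁ : ℕ} {M : Type*} [AddCommMonoid M] (f : Fin (2 * d₁) → M) :
    ∑ p, f p = ∑ k : Fin d₁, (f (idx0 k) + f (idx1 k)) := by
  rw [← Equiv.sum_comp (pairEquiv d₁) f, Fintype.sum_prod_type]
  refine Finset.sum_congr rfl fun k _ => ?_
  have e0 : (pairEquiv d₁) (k, 0) = idx0 k := by
    ext; simp [pairEquiv, idx0]
  have e1 : (pairEquiv d₁) (k, 1) = idx1 k := by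
    ext; simp [pairEquiv, idx1]
  rw [Fin.sum_univ_two, e0, e1]

variable {d₁ : ℕ} (η : Fin d₁ → ℝ)

lemma skew00 (k l : Fin d₁) : canonicalSkew (2 * d₁) d₁ η (idx0 k) (idx0 l) = 0 := by
  simp only [canonicalSkew, idx0, Matrix.of_apply]
  split_ifs with h h1 h2 <;> first | rfl | omega

lemma skew11 (k l : Fin d₁) : canonicalSkew (2 * d₁) d₁ η (idx1 k) (idx1 l) = 0 := by
  simp only [canonicalSkew, idx1, Matrix.of_apply]
  split_ifs with h h1 h2 <;> first | rfl | omega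

lemma skew01 (k l : Fin d₁) :
    canonicalSkew (2 * d₁) d₁ η (idx0 k) (idx1 l) = if k = l then -η k else 0 := by
  rcases k with ⟨k, hk⟩; rcases l with ⟨l, hl⟩
  simp only [canonicalSkew, idx0, idx1, Matrix.of_apply, Fin.mk.injEq]
  by_cases h : k = l
  · subst h
    rw [dif_pos ⟨by omega, by omega⟩, if_pos ⟨by omega, by omega⟩, if_pos rfl]
    have hq : 2 * k / 2 = k := by omega
    simp only [hq]
  · rw [dif_neg (by omega), if_neg h]

lemma skew10 (k l : Fin d₁) :
    canonicalSkew (2 * d₁) d₁ η (idx1 k) (idx0 l) = if k = l then η k else 0 := by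
  rcases k with ⟨k, hk⟩; rcases l with ⟨l, hl⟩
  simp only [canonicalSkew, idx0, idx1, Matrix.of_apply, Fin.mk.injEq]
  by_cases h : k = l
  · subst h
    rw [dif_pos ⟨by omega, by omega⟩, if_neg (by omega), if_pos ⟨by omega, by omega⟩,
      if_pos rfl]
    have hq : (2 * k + 1) / 2 = k := by omega
    simp only [hq]
  · rw [dif_neg (by omega), if_neg h]

/-- column sums against the skew matrix -/
lemma skew_col0 (l : Fin d₁) (f : Fin (2 * d₁) → ℝ) :
    ∑ p, canonicalSkew (2 * d₁) d₁ η p (idx0 l) * f p = η l * f (idx1 l) := by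
  rw [sum_split (fun p => canonicalSkew (2 * d₁) d₁ η p (idx0 l) * f p)]
  simp only [skew00, skew10, zero_mul, ite_mul, zero_add]
  simp [Finset.sum_ite_eq' Finset.univ l]

lemma skew_col1 (l : Fin d₁) (f : Fin (2 * d₁) → ℝ) :
    ∑ p, canonicalSkew (2 * d₁) d₁ η p (idx1 l) * f p = -η l * f (idx0 l) := by
  rw [sum_split (fun p => canonicalSkew (2 * d₁) d₁ η p (idx1 l) * f p)]
  simp only [skew01, skew11, zero_mul, ite_mul, add_zero]
  simp [Finset.sum_ite_eq' Finset.univ l]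

section Ortho
variable {n : ℕ} {O : Matrix (Fin n) (Fin n) ℝ}

lemma row_ortho (hO : Oᵀ * O = 1) (p q : Fin n) : ∑ j, O p j * O q j = if p = q then 1 else 0 := by
  have h1 : O * Oᵀ = 1 := mul_eq_one_comm.mpr hO
  have := congrFun (congrFun h1 p) q
  simpa [Matrix.mul_apply, Matrix.one_apply, Matrix.transpose_apply] using this

lemma rows_pairing (hO : Oᵀ * O = 1) (x y : Fin n → ℝ) :
    ∑ j, (∑ i, x i * O i j) * (∑ i, y i * O i j) = ∑ i, x i * y i := by
  have step : ∀ j : Fin n, (∑ i, x i * O i j) * (∑ i, y i * O i j)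
      = ∑ i, ∑ i', (x i * y i') * (O i j * O i' j) := by
    intro j
    rw [Finset.sum_mul_sum]
    exact Finset.sum_congr rfl fun i _ => Finset.sum_congr rfl fun i' _ => by ring
  rw [Finset.sum_congr rfl fun j _ => step j, Finset.sum_comm]
  refine Finset.sum_congr rfl fun i _ => ?_
  rw [Finset.sum_comm]
  have : ∀ i' : Fin n, ∑ j, (x i * y i') * (O i j * O i' j)
      = (x i * y i') * (if i = i' then 1 else 0) := by
    intro i'
    rw [← Finset.mul_sum, row_ortho hO]
  rw [Finset.sum_congr rfl fun i' _ => this i']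
  simp [mul_ite, Finset.sum_ite_eq]

end Ortho

lemma mulVec_update {n : ℕ} (M : Matrix (Fin n) (Fin n) ℝ) (w : Fin n → ℝ) (j : Fin n)
    (s : ℝ) (p : Fin n) :
    M.mulVec (Function.update w j s) p = M.mulVec w p + M p j * (s - w j) := by
  simp only [Matrix.mulVec, dotProduct]
  have : ∀ i : Fin n, M p i * (Function.update w j s i)
      = M p i * w i + (if i = j then M p j * (s - w j) else 0) := by
    intro i
    rcases eq_or_ne i j with rfl | h
    · simp [Function.update]; ring
    · simp [Function.update, h]
  rw [Finset.sum_congr rfl fun i _ => this i, Finset.sum_add_distrib]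
  simp

lemma per_aux (a p q x : ℝ) :
    -(-(a / 2 * (Real.sinh x / Real.cosh x)) - a ^ 2 / 8 * (p ^ 2 + q ^ 2) / Real.cosh x ^ 2)
      + (1 / 2) * ((a / 2 * (Real.sinh x / Real.cosh x) * p * (a / 2 * (Real.sinh x / Real.cosh x) * p)
        + a / 2 * (Real.sinh x / Real.cosh x) * q * (a / 2 * (Real.sinh x / Real.cosh x) * q))
        + -(a * (Real.sinh x / Real.cosh x)))
      - (1 / 8) * (a * q * (a * q) + -(a * p) * -(a * p)) = 0 := by
  have h2 := Real.cosh_sq_sub_sinh_sq x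
  have h0 := (Real.cosh_pos x).ne'
  field_simp
  linear_combination (-8 * a ^ 2 * (p ^ 2 + q ^ 2)) * h2

/-- The explicit formula for the conditional characteristic function of the Lévy area of
`d`-dimensional Brownian motion (non-degenerate case `d = 2d₁`, `Λ = OᵀΣ(η)O`, `η k > 0`)
has value `1` at `t = 0` and solves the PDE
`−∂ₜ𝓛 + ½Δ𝓛 + (i/2)∑ⱼ(wᵀΛ)ⱼ∂ⱼ𝓛 − (1/8)(wᵀΛΛᵀw)𝓛 = 0`. -/
theorem levy_char_solves_pde (d₁ : ℕ) (η : Fin d₁ → ℝ) (hη : ∀ k, 0 < η k)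
    (O : Matrix (Fin (2 * d₁)) (Fin (2 * d₁)) ℝ) (hO : Oᵀ * O = 1)
    (Λ : Matrix (Fin (2 * d₁)) (Fin (2 * d₁)) ℝ)
    (hΛ : Λ = Oᵀ * canonicalSkew (2 * d₁) d₁ η * O)
    (𝓛 : ℝ → (Fin (2 * d₁) → ℝ) → ℂ)
    (h𝓛 : ∀ t w, 𝓛 t w =
      (((∏ k : Fin d₁, (Real.cosh (η k * t / 2))⁻¹) *
        Real.exp (-∑ k : Fin d₁, (η k / 4) *
          ((O.mulVec w (idx0 k)) ^ 2 + (O.mulVec w (idx1 k)) ^ 2) *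
          Real.tanh (η k * t / 2)) : ℝ) : ℂ)) :
    (∀ w, 𝓛 0 w = 1) ∧
    ∀ (t : ℝ) (w : Fin (2 * d₁) → ℝ),
      -(deriv (fun s => 𝓛 s w) t)
      + (1 / 2) * ∑ j, deriv (deriv (fun s => 𝓛 t (Function.update w j s))) (w j)
      + (Complex.I / 2) * ∑ j, ((Λᵀ.mulVec w j : ℝ) : ℂ) *
          deriv (fun s => 𝓛 t (Function.update w j s)) (w j)
      - (1 / 8) * ((w ⬝ᵥ ((Λ * Λᵀ).mulVec w) : ℝ) : ℂ) * 𝓛 t w = 0 := by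
  have hcoshne : ∀ x : ℝ, Real.cosh x ≠ 0 := fun x => (Real.cosh_pos x).ne'
  constructor
  · intro w
    rw [h𝓛]
    simp [Real.tanh_zero]
  intro t w
  -- abbreviations
  set P : ℝ := ∏ k : Fin d₁, (Real.cosh (η k * t / 2))⁻¹ with hP
  set E : ℝ := -∑ k : Fin d₁, (η k / 4) *
      ((O.mulVec w (idx0 k)) ^ 2 + (O.mulVec w (idx1 k)) ^ 2) *
      Real.tanh (η k * t / 2) with hE
  set G : ℝ := P * Real.exp E with hG
  have hLG : 𝓛 t w = ((G : ℝ) : ℂ) := by rw [h𝓛, hG, hP, hE]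
  ------------------------------------------------------------------
  -- TIME DERIVATIVE
  ------------------------------------------------------------------
  set FT : ℝ → ℝ := fun s => ∑ k : Fin d₁,
      (-Real.log (Real.cosh (η k * s / 2)) - η k / 4 *
        ((O.mulVec w (idx0 k)) ^ 2 + (O.mulVec w (idx1 k)) ^ 2) *
        Real.tanh (η k * s / 2)) with hFT
  have hPE : ∀ s : ℝ,
      (∏ k : Fin d₁, (Real.cosh (η k * s / 2))⁻¹) *
        Real.exp (-∑ k : Fin d₁, (η k / 4) *
          ((O.mulVec w (idx0 k)) ^ 2 + (O.mulVec w (idx1 k)) ^ 2) *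
          Real.tanh (η k * s / 2)) = Real.exp (FT s) := by
    intro s
    have h1 : (∏ k : Fin d₁, (Real.cosh (η k * s / 2))⁻¹)
        = Real.exp (∑ k : Fin d₁, -Real.log (Real.cosh (η k * s / 2))) := by
      rw [Real.exp_sum]
      refine Finset.prod_congr rfl fun k _ => ?_
      rw [Real.exp_neg, Real.exp_log (Real.cosh_pos _)]
    rw [h1, ← Real.exp_add, hFT]
    congr 1
    beta_reduce
    rw [Finset.sum_sub_distrib, sub_eq_add_neg]
  have hL_time : (fun s => 𝓛 s w) = fun s => ((Real.exp (FT s) : ℝ) : ℂ) := by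
    funext s
    rw [h𝓛]
    exact congrArg Complex.ofReal (hPE s)
  set AT : ℝ := ∑ k : Fin d₁,
      (-(η k / 2 * Real.tanh (η k * t / 2)) - η k ^ 2 / 8 *
        ((O.mulVec w (idx0 k)) ^ 2 + (O.mulVec w (idx1 k)) ^ 2) /
        Real.cosh (η k * t / 2) ^ 2) with hAT
  have hterm : ∀ k : Fin d₁,
      HasDerivAt (fun s => -Real.log (Real.cosh (η k * s / 2)) - η k / 4 *
          ((O.mulVec w (idx0 k)) ^ 2 + (O.mulVec w (idx1 k)) ^ 2) *
          Real.tanh (η k * s / 2))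
        (-(η k / 2 * Real.tanh (η k * t / 2)) - η k ^ 2 / 8 *
          ((O.mulVec w (idx0 k)) ^ 2 + (O.mulVec w (idx1 k)) ^ 2) /
          Real.cosh (η k * t / 2) ^ 2) t := by
    intro k
    have hlin : HasDerivAt (fun s : ℝ => η k * s / 2) (η k / 2) t := by
      simpa using ((hasDerivAt_id t).const_mul (η k)).div_const 2
    have hch := hlin.cosh
    have hlog := hch.log (hcoshne _)
    have htanh0 := (hlin.sinh).fun_div hch (hcoshne _)
    have hfn : (fun s : ℝ => Real.sinh (η k * s / 2) / Real.cosh (η k * s / 2))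
        = fun s => Real.tanh (η k * s / 2) :=
      funext fun s => (Real.tanh_eq_sinh_div_cosh _).symm
    rw [hfn] at htanh0
    have H := (hlog.fun_neg).fun_sub
      (htanh0.const_mul (η k / 4 *
        ((O.mulVec w (idx0 k)) ^ 2 + (O.mulVec w (idx1 k)) ^ 2)))
    refine H.congr_deriv ?_
    have h2 := Real.cosh_sq_sub_sinh_sq (η k * t / 2)
    have key : Real.cosh (η k * t / 2) * (η k / 2) * Real.cosh (η k * t / 2) -
        Real.sinh (η k * t / 2) * (Real.sinh (η k * t / 2) * (η k / 2)) = η k / 2 := by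
      linear_combination (η k / 2) * h2
    rw [key, Real.tanh_eq_sinh_div_cosh]
    field_simp
    ring
  have hFT' : HasDerivAt FT AT t := by
    rw [hFT, hAT]
    exact HasDerivAt.fun_sum fun k _ => hterm k
  have hderivT : deriv (fun s => 𝓛 s w) t = ((Real.exp (FT t) * AT : ℝ) : ℂ) := by
    rw [hL_time]
    exact (hFT'.exp.ofReal_comp).deriv
  have hGT : G = Real.exp (FT t) := by rw [hG, hP, hE]; exact hPE t
  ------------------------------------------------------------------
  -- SPATIAL DERIVATIVES
  ------------------------------------------------------------------
  set gval : Fin (2 * d₁) → ℝ := fun j => -∑ k : Fin d₁, η k / 4 *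
      (2 * O.mulVec w (idx0 k) * O (idx0 k) j + 2 * O.mulVec w (idx1 k) * O (idx1 k) j) *
      Real.tanh (η k * t / 2) with hgval
  set h2val : Fin (2 * d₁) → ℝ := fun j => -∑ k : Fin d₁, η k / 4 *
      (2 * O (idx0 k) j * O (idx0 k) j + 2 * O (idx1 k) j * O (idx1 k) j) *
      Real.tanh (η k * t / 2) with hh2val
  have spatial : ∀ j : Fin (2 * d₁),
      deriv (fun s => 𝓛 t (Function.update w j s)) (w j) = ((G * gval j : ℝ) : ℂ) ∧
      deriv (deriv (fun s => 𝓛 t (Function.update w j s))) (w j)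
        = ((G * (gval j * gval j) + G * h2val j : ℝ) : ℂ) := by
    intro j
    set Qj : ℝ → ℝ := fun s => -∑ k : Fin d₁, η k / 4 *
        ((O.mulVec w (idx0 k) + O (idx0 k) j * (s - w j)) ^ 2 +
         (O.mulVec w (idx1 k) + O (idx1 k) j * (s - w j)) ^ 2) *
        Real.tanh (η k * t / 2) with hQj
    set gfun : ℝ → ℝ := fun s => -∑ k : Fin d₁, η k / 4 *
        (2 * (O.mulVec w (idx0 k) + O (idx0 k) j * (s - w j)) * O (idx0 k) j +
         2 * (O.mulVec w (idx1 k) + O (idx1 k) j * (s - w j)) * O (idx1 k) j) *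
        Real.tanh (η k * t / 2) with hgfun
    have hbase : ∀ (s : ℝ) (p : Fin (2 * d₁)),
        HasDerivAt (fun s : ℝ => O.mulVec w p + O p j * (s - w j)) (O p j) s := by
      intro s p
      simpa using (((hasDerivAt_id s).sub_const (w j)).const_mul (O p j)).const_add
        (O.mulVec w p)
    have hupdate : (fun s => 𝓛 t (Function.update w j s))
        = fun s => ((P * Real.exp (Qj s) : ℝ) : ℂ) := by
      funext s
      rw [h𝓛]
      have h3 : (-∑ k : Fin d₁, (η k / 4) *
          ((O.mulVec (Function.update w j s) (idx0 k)) ^ 2 +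
           (O.mulVec (Function.update w j s) (idx1 k)) ^ 2) *
          Real.tanh (η k * t / 2)) = Qj s := by
        rw [hQj]
        simp only [mulVec_update]
      rw [h3, hP]
    have hQ' : ∀ s, HasDerivAt Qj (gfun s) s := by
      intro s
      rw [hQj, hgfun]
      refine HasDerivAt.neg (HasDerivAt.fun_sum fun k _ => ?_)
      have H := ((((hbase s (idx0 k)).fun_pow 2).fun_add ((hbase s (idx1 k)).fun_pow 2)).const_mul
        (η k / 4)).mul_const (Real.tanh (η k * t / 2))
      refine H.congr_deriv ?_
      push_cast
      ring
    have hPhi : ∀ s, HasDerivAt (fun s => P * Real.exp (Qj s))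
        (P * Real.exp (Qj s) * gfun s) s := by
      intro s
      simpa [mul_assoc] using ((hQ' s).exp.const_mul P)
    have hderiv1 : deriv (fun s => 𝓛 t (Function.update w j s))
        = fun s => ((P * Real.exp (Qj s) * gfun s : ℝ) : ℂ) := by
      funext s
      rw [hupdate]
      exact ((hPhi s).ofReal_comp).deriv
    have hg' : HasDerivAt gfun (h2val j) (w j) := by
      rw [hgfun, hh2val]
      beta_reduce
      refine HasDerivAt.neg (HasDerivAt.fun_sum fun k _ => ?_)
      exact (((((hbase (w j) (idx0 k)).const_mul 2).mul_const (O (idx0 k) j)).add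
        (((hbase (w j) (idx1 k)).const_mul 2).mul_const (O (idx1 k) j))).const_mul
        (η k / 4)).mul_const (Real.tanh (η k * t / 2))
    have hQw : Qj (w j) = E := by
      rw [hQj, hE]
      simp
    have hgw : gfun (w j) = gval j := by
      rw [hgfun, hgval]
      simp
    have hPQ : P * Real.exp (Qj (w j)) = G := by rw [hQw, hG]
    constructor
    · rw [hderiv1]
      beta_reduce
      rw [hPQ, hgw]
    · rw [hderiv1]
      have H := (hPhi (w j)).fun_mul hg'
      have := (H.ofReal_comp).deriv
      rw [this]
      rw [hPQ, hgw]
      push_cast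
      ring
  ------------------------------------------------------------------
  -- ALGEBRAIC IDENTITIES
  ------------------------------------------------------------------
  set blk : Fin (2 * d₁) → Fin d₁ := fun i => ⟨i.val / 2, by have := i.isLt; omega⟩ with hblk
  have hblk0 : ∀ k, blk (idx0 k) = k := by
    intro k; rw [hblk]; ext; simp only [idx0]; omega
  have hblk1 : ∀ k, blk (idx1 k) = k := by
    intro k; rw [hblk]; ext; simp only [idx1]; omega
  set xcoef : Fin (2 * d₁) → ℝ :=
    fun i => η (blk i) / 2 * Real.tanh (η (blk i) * t / 2) * O.mulVec w i with hxcoef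
  set ν : Fin (2 * d₁) → ℝ := fun i => if i.val % 2 = 0 then
      η (blk i) * O.mulVec w (idx1 (blk i))
    else -(η (blk i) * O.mulVec w (idx0 (blk i))) with hν
  have hxc0 : ∀ k, xcoef (idx0 k)
      = η k / 2 * Real.tanh (η k * t / 2) * O.mulVec w (idx0 k) := by
    intro k; rw [hxcoef]; beta_reduce; rw [hblk0]
  have hxc1 : ∀ k, xcoef (idx1 k)
      = η k / 2 * Real.tanh (η k * t / 2) * O.mulVec w (idx1 k) := by
    intro k; rw [hxcoef]; beta_reduce; rw [hblk1]
  have hν0 : ∀ k, ν (idx0 k) = η k * O.mulVec w (idx1 k) := by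
    intro k; rw [hν]; beta_reduce
    rw [if_pos (by simp only [idx0]; omega), hblk0]
  have hν1 : ∀ k, ν (idx1 k) = -(η k * O.mulVec w (idx0 k)) := by
    intro k; rw [hν]; beta_reduce
    rw [if_neg (by simp only [idx1]; omega), hblk1]
  have hgrow : ∀ j, gval j = -∑ i, xcoef i * O i j := by
    intro j
    rw [hgval]; beta_reduce
    rw [sum_split (fun i => xcoef i * O i j)]
    refine congrArg Neg.neg (Finset.sum_congr rfl fun k _ => ?_)
    rw [hxc0, hxc1]
    ring
  have hh2row : ∀ j, h2val j
      = -∑ i, (η (blk i) / 2 * Real.tanh (η (blk i) * t / 2)) * (O i j * O i j) := by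
    intro j
    rw [hh2val]; beta_reduce
    rw [sum_split (fun i => (η (blk i) / 2 * Real.tanh (η (blk i) * t / 2)) * (O i j * O i j))]
    refine congrArg Neg.neg (Finset.sum_congr rfl fun k _ => ?_)
    rw [hblk0, hblk1]
    ring
  have hνrow : ∀ j, Λᵀ.mulVec w j = ∑ i, ν i * O i j := by
    intro j
    have hΛT : Λᵀ = Oᵀ * (canonicalSkew (2 * d₁) d₁ η)ᵀ * O := by
      rw [hΛ]
      simp [Matrix.transpose_mul, Matrix.mul_assoc]
    rw [hΛT, ← Matrix.mulVec_mulVec, ← Matrix.mulVec_mulVec]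
    show ∑ q, Oᵀ j q * ((canonicalSkew (2 * d₁) d₁ η)ᵀ.mulVec (O.mulVec w)) q = _
    simp only [Matrix.mulVec, dotProduct, Matrix.transpose_apply]
    rw [sum_split (fun q => O q j * ∑ p, canonicalSkew (2 * d₁) d₁ η p q
      * ∑ i, O p i * w i)]
    rw [sum_split (fun i => ν i * O i j)]
    refine Finset.sum_congr rfl fun l _ => ?_
    rw [skew_col0 η l (fun p => ∑ i, O p i * w i), skew_col1 η l (fun p => ∑ i, O p i * w i),
      hν0, hν1]
    simp only [Matrix.mulVec, dotProduct]
    ring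
  have hX1 : ∑ j, gval j * gval j
      = ∑ k, (xcoef (idx0 k) * xcoef (idx0 k) + xcoef (idx1 k) * xcoef (idx1 k)) := by
    have h5 : ∀ j, gval j * gval j
        = (∑ i, xcoef i * O i j) * (∑ i, xcoef i * O i j) := fun j => by rw [hgrow j]; ring
    rw [Finset.sum_congr rfl fun j _ => h5 j, rows_pairing hO,
      sum_split (fun i => xcoef i * xcoef i)]
  have hX2 : ∑ j, h2val j = -∑ k, η k * Real.tanh (η k * t / 2) := by
    rw [Finset.sum_congr rfl fun j _ => hh2row j, Finset.sum_neg_distrib]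
    refine congrArg Neg.neg ?_
    rw [Finset.sum_comm]
    have h6 : ∀ i : Fin (2 * d₁), ∑ j, (η (blk i) / 2 * Real.tanh (η (blk i) * t / 2))
        * (O i j * O i j) = η (blk i) / 2 * Real.tanh (η (blk i) * t / 2) := by
      intro i
      rw [← Finset.mul_sum, row_ortho hO]
      simp
    rw [Finset.sum_congr rfl fun i _ => h6 i,
      sum_split (fun i => η (blk i) / 2 * Real.tanh (η (blk i) * t / 2))]
    refine Finset.sum_congr rfl fun k _ => ?_
    rw [hblk0, hblk1]
    ring
  have hdrift : ∑ j, Λᵀ.mulVec w j * gval j = 0 := by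
    have h7 : ∀ j, Λᵀ.mulVec w j * gval j
        = -((∑ i, ν i * O i j) * (∑ i, xcoef i * O i j)) := fun j => by
      rw [hνrow j, hgrow j]; ring
    rw [Finset.sum_congr rfl fun j _ => h7 j, Finset.sum_neg_distrib, rows_pairing hO,
      sum_split (fun i => ν i * xcoef i)]
    have h8 : ∀ k : Fin d₁, ν (idx0 k) * xcoef (idx0 k) + ν (idx1 k) * xcoef (idx1 k) = 0 := by
      intro k
      rw [hν0, hν1, hxc0, hxc1]
      ring
    rw [Finset.sum_congr rfl fun k _ => h8 k]
    simp
  have hW : w ⬝ᵥ (Λ * Λᵀ).mulVec w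
      = ∑ k, (ν (idx0 k) * ν (idx0 k) + ν (idx1 k) * ν (idx1 k)) := by
    rw [← Matrix.mulVec_mulVec, Matrix.dotProduct_mulVec]
    have hvm : w ᵥ* Λ = Λᵀ.mulVec w := by
      simpa using Matrix.vecMul_transpose Λᵀ w
    rw [hvm]
    show ∑ j, Λᵀ.mulVec w j * Λᵀ.mulVec w j = _
    rw [Finset.sum_congr rfl fun j (_ : j ∈ Finset.univ) => by rw [hνrow j],
      rows_pairing hO, sum_split (fun i => ν i * ν i)]
  ------------------------------------------------------------------
  -- FINAL ASSEMBLY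
  ------------------------------------------------------------------
  have per : ∀ k : Fin d₁,
      -(-(η k / 2 * Real.tanh (η k * t / 2)) - η k ^ 2 / 8 *
          ((O.mulVec w (idx0 k)) ^ 2 + (O.mulVec w (idx1 k)) ^ 2) /
          Real.cosh (η k * t / 2) ^ 2)
        + (1 / 2) * ((xcoef (idx0 k) * xcoef (idx0 k) + xcoef (idx1 k) * xcoef (idx1 k))
          + -(η k * Real.tanh (η k * t / 2)))
        - (1 / 8) * (ν (idx0 k) * ν (idx0 k) + ν (idx1 k) * ν (idx1 k)) = 0 := by
    intro k
    rw [hxc0, hxc1, hν0, hν1]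
    simp only [Real.tanh_eq_sinh_div_cosh]
    exact per_aux (η k) (O.mulVec w (idx0 k)) (O.mulVec w (idx1 k)) (η k * t / 2)
  have hb : -(∑ k : Fin d₁,
        (-(η k / 2 * Real.tanh (η k * t / 2)) - η k ^ 2 / 8 *
          ((O.mulVec w (idx0 k)) ^ 2 + (O.mulVec w (idx1 k)) ^ 2) /
          Real.cosh (η k * t / 2) ^ 2))
      + (1 / 2) * ((∑ k, (xcoef (idx0 k) * xcoef (idx0 k) + xcoef (idx1 k) * xcoef (idx1 k)))
          + -(∑ k, η k * Real.tanh (η k * t / 2)))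
      - (1 / 8) * (∑ k, (ν (idx0 k) * ν (idx0 k) + ν (idx1 k) * ν (idx1 k))) = 0 := by
    rw [← Finset.sum_neg_distrib, ← Finset.sum_neg_distrib, ← Finset.sum_add_distrib,
      Finset.mul_sum, Finset.mul_sum, ← Finset.sum_add_distrib, ← Finset.sum_sub_distrib,
      Finset.sum_congr rfl fun k _ => per k]
    exact Finset.sum_const_zero
  have main : -(Real.exp (FT t) * AT)
      + (1 / 2) * (G * (∑ j, gval j * gval j) + G * (∑ j, h2val j))
      - (1 / 8) * ((w ⬝ᵥ (Λ * Λᵀ).mulVec w) * G) = 0 := by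
    rw [← hGT, hX1, hX2, hW, hAT]
    linear_combination G * hb
  rw [hderivT, hLG]
  have hsum2 : ∑ j, deriv (deriv (fun s => 𝓛 t (Function.update w j s))) (w j)
      = ∑ j, ((G * (gval j * gval j) + G * h2val j : ℝ) : ℂ) :=
    Finset.sum_congr rfl fun j _ => (spatial j).2
  have hsum3 : ∑ j, (((Λᵀ.mulVec w j : ℝ)) : ℂ) *
        deriv (fun s => 𝓛 t (Function.update w j s)) (w j)
      = ∑ j, (((Λᵀ.mulVec w j : ℝ)) : ℂ) * ((G * gval j : ℝ) : ℂ) :=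
    Finset.sum_congr rfl fun j _ => by rw [(spatial j).1]
  rw [hsum2, hsum3]
  have e1 : ∑ j, ((G * (gval j * gval j) + G * h2val j : ℝ) : ℂ)
      = ((G * (∑ j, gval j * gval j) + G * (∑ j, h2val j) : ℝ) : ℂ) := by
    rw [← Complex.ofReal_sum]
    exact congrArg Complex.ofReal
      (by rw [Finset.sum_add_distrib, ← Finset.mul_sum, ← Finset.mul_sum])
  have e2 : ∑ j, (((Λᵀ.mulVec w j : ℝ)) : ℂ) * (((G * gval j : ℝ)) : ℂ) = 0 := by
    have h4 : ∑ j, Λᵀ.mulVec w j * (G * gval j) = 0 := by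
      have h9 : ∀ j, Λᵀ.mulVec w j * (G * gval j)
          = G * (Λᵀ.mulVec w j * gval j) := fun j => by ring
      rw [Finset.sum_congr rfl fun j _ => h9 j, ← Finset.mul_sum, hdrift, mul_zero]
    calc ∑ j, (((Λᵀ.mulVec w j : ℝ)) : ℂ) * (((G * gval j : ℝ)) : ℂ)
        = ((∑ j, Λᵀ.mulVec w j * (G * gval j) : ℝ) : ℂ) := by push_cast; rfl
      _ = 0 := by rw [h4]; norm_num
  rw [e1, e2]
  have hC := congrArg Complex.ofReal main
  push_cast at hC ⊢
  linear_combination hC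
end

section
/- Let d₁ be a natural number, d = 2·d₁, η : Fin d₁ → ℝ with η k ≠ 0 for all k, O a real orthogonal d×d matrix (Oᵀ * O = 1), and Λ = Oᵀ * Σ(η) * O. Then Λ is invertible, and for every μ : Fin d → ℝ, setting w = (2 : ℝ) • ((Λᵀ)⁻¹.mulVec μ), one has for every k < d₁: ((O.mulVec w)(2k))² + ((O.mulVec w)(2k+1))² = (4/(η k)²) · ( ((O.mulVec μ)(2k))² + ((O.mulVec μ)(2k+1))² ). -/
open Matrix

@[simp] lemma idx0_val {d₁ : ℕ} (k : Fin d₁) : (idx0 k).val = 2 * k.val := rfl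
@[simp] lemma idx1_val {d₁ : ℕ} (k : Fin d₁) : (idx1 k).val = 2 * k.val + 1 := rfl

lemma idx0_inj {d₁ : ℕ} {k k' : Fin d₁} : idx0 k = idx0 k' ↔ k = k' := by
  rw [Fin.ext_iff, Fin.ext_iff]; simp only [idx0_val]; omega

lemma idx1_inj {d₁ : ℕ} {k k' : Fin d₁} : idx1 k = idx1 k' ↔ k = k' := by
  rw [Fin.ext_iff, Fin.ext_iff]; simp only [idx1_val]; omega

lemma idx0_ne_idx1 {d₁ : ℕ} (k k' : Fin d₁) : idx0 k ≠ idx1 k' := by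
  rw [Ne, Fin.ext_iff]; simp only [idx0_val, idx1_val]; omega

lemma pairCases {d₁ : ℕ} (i : Fin (2 * d₁)) : ∃ k : Fin d₁, i = idx0 k ∨ i = idx1 k := by
  have hi := i.isLt
  refine ⟨⟨i.val / 2, by omega⟩, ?_⟩
  rcases Nat.even_or_odd i.val with h | h
  · left; apply Fin.ext; simp only [idx0_val]
    obtain ⟨c, hc⟩ := h; omega
  · right; apply Fin.ext; simp only [idx1_val]
    obtain ⟨c, hc⟩ := h; omega

lemma row0 {d₁ : ℕ} (η : Fin d₁ → ℝ) (k : Fin d₁) (j : Fin (2 * d₁)) :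
    canonicalSkew (2 * d₁) d₁ η (idx0 k) j = if j = idx1 k then -η k else 0 := by
  have hk := k.isLt
  by_cases hj : j = idx1 k
  · subst hj
    simp only [canonicalSkew, of_apply, idx0, idx1, if_pos rfl]
    rw [dif_pos (by omega)]
    rw [if_pos (by omega)]
    congr 1
    apply congrArg
    apply Fin.ext
    show 2 * k.val / 2 = k.val
    omega
  · rw [if_neg hj]
    simp only [canonicalSkew, of_apply, idx0]
    split_ifs with h1 h2 h3
    · exfalso; apply hj; apply Fin.ext; simp only [idx1_val]; omega
    · omega
    · rfl
    · rfl

lemma row1 {d₁ : ℕ} (η : Fin d₁ → ℝ) (k : Fin d₁) (j : Fin (2 * d₁)) :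
    canonicalSkew (2 * d₁) d₁ η (idx1 k) j = if j = idx0 k then η k else 0 := by
  have hk := k.isLt
  by_cases hj : j = idx0 k
  · subst hj
    simp only [canonicalSkew, of_apply, idx0, idx1]
    rw [dif_pos (by omega)]
    rw [if_neg (by omega), if_pos (by omega)]
    split_ifs with h
    · apply congrArg
      apply Fin.ext
      show (2 * k.val + 1) / 2 = k.val
      omega
    · exact absurd trivial h
  · rw [if_neg hj]
    simp only [canonicalSkew, of_apply, idx1]
    split_ifs with h1 h2 h3
    · omega
    · exfalso; apply hj; apply Fin.ext; simp only [idx0_val]; omega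
    · rfl
    · rfl

lemma col0 {d₁ : ℕ} (η : Fin d₁ → ℝ) (k : Fin d₁) (j : Fin (2 * d₁)) :
    canonicalSkew (2 * d₁) d₁ η j (idx0 k) = if j = idx1 k then η k else 0 := by
  rcases pairCases j with ⟨k', hk' | hk'⟩ <;> subst hk'
  · rw [row0, if_neg (idx0_ne_idx1 k k'), if_neg (idx0_ne_idx1 k' k)]
  · rw [row1]
    by_cases h : k = k'
    · subst h; rw [if_pos rfl, if_pos rfl]
    · rw [if_neg (fun hh => h (idx0_inj.mp hh)), if_neg (fun hh => h (idx1_inj.mp hh).symm)]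

lemma col1 {d₁ : ℕ} (η : Fin d₁ → ℝ) (k : Fin d₁) (j : Fin (2 * d₁)) :
    canonicalSkew (2 * d₁) d₁ η j (idx1 k) = if j = idx0 k then -η k else 0 := by
  rcases pairCases j with ⟨k', hk' | hk'⟩ <;> subst hk'
  · rw [row0]
    by_cases h : k = k'
    · subst h; rw [if_pos rfl, if_pos rfl]
    · rw [if_neg (fun hh => h (idx1_inj.mp hh)), if_neg (fun hh => h (idx0_inj.mp hh).symm)]
  · rw [row1, if_neg (fun hh => idx0_ne_idx1 k' k hh.symm),
      if_neg (fun hh => idx0_ne_idx1 k k' hh.symm)]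

lemma transpose_mul_canonicalSkew_eq_one {d₁ : ℕ} (η ξ : Fin d₁ → ℝ)
    (h : ∀ k, η k * ξ k = 1) :
    (canonicalSkew (2 * d₁) d₁ η)ᵀ * canonicalSkew (2 * d₁) d₁ ξ = 1 := by
  ext i j
  rcases pairCases i with ⟨k, hk | hk⟩ <;> subst hk
  · rw [mul_apply]
    have : ∀ l, (canonicalSkew (2*d₁) d₁ η)ᵀ (idx0 k) l * canonicalSkew (2*d₁) d₁ ξ l j
        = if l = idx1 k then η k * canonicalSkew (2*d₁) d₁ ξ (idx1 k) j else 0 := by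
      intro l
      rw [transpose_apply, col0]
      split_ifs with hl
      · subst hl; rfl
      · ring
    rw [Finset.sum_congr rfl (fun l _ => this l), Finset.sum_ite_eq' Finset.univ,
      if_pos (Finset.mem_univ _), row1]
    by_cases hj : j = idx0 k
    · subst hj; rw [if_pos rfl, one_apply_eq, h]
    · rw [if_neg hj, mul_zero, one_apply_ne (fun hh => hj hh.symm)]
  · rw [mul_apply]
    have : ∀ l, (canonicalSkew (2*d₁) d₁ η)ᵀ (idx1 k) l * canonicalSkew (2*d₁) d₁ ξ l j
        = if l = idx0 k then -η k * canonicalSkew (2*d₁) d₁ ξ (idx0 k) j else 0 := by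
      intro l
      rw [transpose_apply, col1]
      split_ifs with hl
      · subst hl; rfl
      · ring
    rw [Finset.sum_congr rfl (fun l _ => this l), Finset.sum_ite_eq' Finset.univ,
      if_pos (Finset.mem_univ _), row0]
    by_cases hj : j = idx1 k
    · subst hj; rw [if_pos rfl, one_apply_eq]
      have := h k; ring_nf; ring_nf at this; linarith
    · rw [if_neg hj, mul_zero, one_apply_ne (fun hh => hj hh.symm)]

lemma canonicalSkew_mulVec0 {d₁ : ℕ} (η : Fin d₁ → ℝ) (x : Fin (2*d₁) → ℝ) (k : Fin d₁) :
    (canonicalSkew (2*d₁) d₁ η).mulVec x (idx0 k) = -η k * x (idx1 k) := by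
  rw [mulVec, dotProduct]
  have : ∀ l, canonicalSkew (2*d₁) d₁ η (idx0 k) l * x l
      = if l = idx1 k then -η k * x (idx1 k) else 0 := by
    intro l; rw [row0]; split_ifs with hl
    · subst hl; rfl
    · ring
  rw [Finset.sum_congr rfl (fun l _ => this l), Finset.sum_ite_eq' Finset.univ,
    if_pos (Finset.mem_univ _)]

lemma canonicalSkew_mulVec1 {d₁ : ℕ} (η : Fin d₁ → ℝ) (x : Fin (2*d₁) → ℝ) (k : Fin d₁) :
    (canonicalSkew (2*d₁) d₁ η).mulVec x (idx1 k) = η k * x (idx0 k) := by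
  rw [mulVec, dotProduct]
  have : ∀ l, canonicalSkew (2*d₁) d₁ η (idx1 k) l * x l
      = if l = idx0 k then η k * x (idx0 k) else 0 := by
    intro l; rw [row1]; split_ifs with hl
    · subst hl; rfl
    · ring
  rw [Finset.sum_congr rfl (fun l _ => this l), Finset.sum_ite_eq' Finset.univ,
    if_pos (Finset.mem_univ _)]

/-- When all `η k ≠ 0`, `Λ = OᵀΣ(η)O` is invertible, and substituting
`w = 2(Λᵀ)⁻¹μ` one has `(Ow)_{2k}² + (Ow)_{2k+1}² = (4/η_k²)((Oμ)_{2k}² + (Oμ)_{2k+1}²)`. -/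
theorem substitution_blocks (d₁ : ℕ) (η : Fin d₁ → ℝ) (hη : ∀ k, η k ≠ 0)
    (O : Matrix (Fin (2 * d₁)) (Fin (2 * d₁)) ℝ) (hO : Oᵀ * O = 1)
    (Λ : Matrix (Fin (2 * d₁)) (Fin (2 * d₁)) ℝ)
    (hΛ : Λ = Oᵀ * canonicalSkew (2 * d₁) d₁ η * O) :
    IsUnit Λ ∧
    ∀ (μ : Fin (2 * d₁) → ℝ) (w : Fin (2 * d₁) → ℝ),
      w = (2 : ℝ) • ((Λᵀ)⁻¹.mulVec μ) →
      ∀ k : Fin d₁,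
        (O.mulVec w (idx0 k)) ^ 2 + (O.mulVec w (idx1 k)) ^ 2 =
          (4 / (η k) ^ 2) * ((O.mulVec μ (idx0 k)) ^ 2 + (O.mulVec μ (idx1 k)) ^ 2) := by
  set S := canonicalSkew (2 * d₁) d₁ η with hS
  set N := canonicalSkew (2 * d₁) d₁ (fun k => (η k)⁻¹) with hN
  have hSN : Sᵀ * N = 1 :=
    transpose_mul_canonicalSkew_eq_one η _ (fun k => mul_inv_cancel₀ (hη k))
  have hOOt : O * Oᵀ = 1 := mul_eq_one_comm.mp hO
  have hΛT : Λᵀ = Oᵀ * Sᵀ * O := by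
    rw [hΛ, transpose_mul, transpose_mul, transpose_transpose, Matrix.mul_assoc]
  have hright : Λᵀ * (Oᵀ * N * O) = 1 := by
    rw [hΛT]
    simp only [Matrix.mul_assoc]
    rw [← Matrix.mul_assoc O Oᵀ, hOOt, Matrix.one_mul, ← Matrix.mul_assoc Sᵀ N, hSN,
      Matrix.one_mul, hO]
  have hdet : IsUnit Λ.det := by
    have := Matrix.isUnit_det_of_right_inverse hright
    rwa [Matrix.det_transpose] at this
  refine ⟨(Matrix.isUnit_iff_isUnit_det Λ).mpr hdet, ?_⟩
  have hinv : (Λᵀ)⁻¹ = Oᵀ * N * O := Matrix.inv_eq_right_inv hright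
  intro μ w hw k
  have hOw : O.mulVec w = fun i => 2 * N.mulVec (O.mulVec μ) i := by
    funext i
    rw [hw, Matrix.mulVec_smul, hinv, Matrix.mulVec_mulVec]
    have hOON : O * (Oᵀ * N * O) = N * O := by
      rw [← Matrix.mul_assoc, ← Matrix.mul_assoc, hOOt, Matrix.one_mul]
    rw [hOON, ← Matrix.mulVec_mulVec]
    simp
  rw [hOw]
  simp only [hN, canonicalSkew_mulVec0, canonicalSkew_mulVec1]
  have hk := hη k
  field_simp
  ring
end

section
/- Let d₁ be a natural number, d = 2·d₁, η : Fin d₁ → ℝ with η k > 0 for all k, O a real orthogonal d×d matrix (Oᵀ * O = 1), and Λ = Oᵀ * Σ(η) * O. Then for every μ : Fin d → ℝ and every t ∈ ℝ, setting w = (2 : ℝ) • ((Λᵀ)⁻¹.mulVec μ), the following equality of real numbers holds: ( ∏_{k<d₁} (cosh(η k · t/2))⁻¹ ) · exp( − ∑_{k<d₁} (η k /4) · ( ((O.mulVec w)(2k))² + ((O.mulVec w)(2k+1))² ) · tanh(η k · t/2) ) = ( ∏_{k<d₁} (cosh(η k · t/2))⁻¹ ) · exp( − ∑_{k<d₁}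 (1/(η k)) · ( ((O.mulVec μ)(2k))² + ((O.mulVec μ)(2k+1))² ) · tanh(η k · t/2) ). -/
open Matrix

namespace LCSaux

def partner {d₁ : ℕ} (i : Fin (2 * d₁)) : Fin (2 * d₁) :=
  ⟨2 * (i.val / 2) + (1 - i.val % 2), by have := i.isLt; omega⟩

lemma skew_apply_ne {d₁ : ℕ} (η : Fin d₁ → ℝ) (i l : Fin (2 * d₁)) (h : l ≠ partner i) :
    canonicalSkew (2 * d₁) d₁ η i l = 0 := by
  unfold canonicalSkew
  simp only [Matrix.of_apply]
  split_ifs with h1 h2 h3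
  · exact absurd (Fin.ext (show l.val = (partner i).val by simp only [partner]; omega)) h
  · exact absurd (Fin.ext (show l.val = (partner i).val by simp only [partner]; omega)) h
  · rfl
  · rfl

lemma skew_apply_partner {d₁ : ℕ} (η : Fin d₁ → ℝ) (i : Fin (2 * d₁)) :
    canonicalSkew (2 * d₁) d₁ η i (partner i) =
      if i.val % 2 = 0 then -η ⟨i.val / 2, by have := i.isLt; omega⟩
      else η ⟨i.val / 2, by have := i.isLt; omega⟩ := by
  have hi := i.isLt
  unfold canonicalSkew partner
  simp only [Matrix.of_apply]
  rcases Nat.mod_two_eq_zero_or_one i.val with h | h <;>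
    · split_ifs <;> first | rfl | omega

lemma partner_partner {d₁ : ℕ} (i : Fin (2 * d₁)) : partner (partner i) = i := by
  apply Fin.ext
  simp only [partner]
  omega

lemma skew_mulVec {d₁ : ℕ} (η : Fin d₁ → ℝ) (x : Fin (2 * d₁) → ℝ) (i : Fin (2 * d₁)) :
    (canonicalSkew (2 * d₁) d₁ η).mulVec x i =
      canonicalSkew (2 * d₁) d₁ η i (partner i) * x (partner i) := by
  unfold Matrix.mulVec dotProduct
  exact Finset.sum_eq_single _
    (fun l _ hl => by simp only [skew_apply_ne η i l hl, zero_mul]) (by simp)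

lemma partner_idx0 {d₁ : ℕ} (k : Fin d₁) : partner (idx0 k) = idx1 k := by
  apply Fin.ext; simp only [partner, idx0, idx1]; omega

lemma partner_idx1 {d₁ : ℕ} (k : Fin d₁) : partner (idx1 k) = idx0 k := by
  apply Fin.ext; simp only [partner, idx0, idx1]; omega

lemma skew_mulVec_idx0 {d₁ : ℕ} (η : Fin d₁ → ℝ) (x : Fin (2 * d₁) → ℝ) (k : Fin d₁) :
    (canonicalSkew (2 * d₁) d₁ η).mulVec x (idx0 k) = -η k * x (idx1 k) := by
  rw [skew_mulVec, skew_apply_partner, partner_idx0]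
  have h0 : (idx0 k).val % 2 = 0 := by simp [idx0]
  rw [if_pos h0]
  have he : (⟨(idx0 k).val / 2, by have := (idx0 k).isLt; omega⟩ : Fin d₁) = k :=
    Fin.ext (show (idx0 k).val / 2 = k.val by simp [idx0])
  rw [he]

lemma skew_mulVec_idx1 {d₁ : ℕ} (η : Fin d₁ → ℝ) (x : Fin (2 * d₁) → ℝ) (k : Fin d₁) :
    (canonicalSkew (2 * d₁) d₁ η).mulVec x (idx1 k) = η k * x (idx0 k) := by
  rw [skew_mulVec, skew_apply_partner, partner_idx1]
  have h0 : (idx1 k).val % 2 = 1 := by simp [idx1]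
  rw [if_neg (by omega)]
  have he : (⟨(idx1 k).val / 2, by have := (idx1 k).isLt; omega⟩ : Fin d₁) = k :=
    Fin.ext (show (idx1 k).val / 2 = k.val by simp [idx1]; omega)
  rw [he]

lemma skew_transpose {d₁ : ℕ} (η : Fin d₁ → ℝ) :
    (canonicalSkew (2 * d₁) d₁ η)ᵀ = canonicalSkew (2 * d₁) d₁ (fun k => -η k) := by
  ext i j
  have hi := i.isLt; have hj := j.isLt
  by_cases hc : i.val / 2 = j.val / 2
  · rcases Nat.mod_two_eq_zero_or_one i.val with hi2 | hi2 <;>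
      rcases Nat.mod_two_eq_zero_or_one j.val with hj2 | hj2 <;>
      simp [canonicalSkew, hi2, hj2, hc, (show j.val / 2 < d₁ by omega)]
  · show canonicalSkew (2 * d₁) d₁ η j i = _
    unfold canonicalSkew
    simp only [Matrix.of_apply]
    rw [dif_neg (by omega), dif_neg (by omega)]

lemma skew_mul {d₁ : ℕ} (η₁ η₂ : Fin d₁ → ℝ) :
    canonicalSkew (2 * d₁) d₁ η₁ * canonicalSkew (2 * d₁) d₁ η₂ =
      Matrix.diagonal (fun i : Fin (2 * d₁) =>
        -(η₁ ⟨i.val / 2, by have := i.isLt; omega⟩ *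
          η₂ ⟨i.val / 2, by have := i.isLt; omega⟩)) := by
  ext i j
  rw [Matrix.mul_apply]
  rw [Finset.sum_eq_single (partner i)
    (fun l _ hl => by simp only [skew_apply_ne η₁ i l hl, zero_mul]) (by simp)]
  by_cases hj : j = i
  · subst hj
    rw [Matrix.diagonal_apply_eq]
    rw [skew_apply_partner]
    have h2 := skew_apply_partner η₂ (partner j)
    rw [partner_partner] at h2
    rw [h2]
    have hi := j.isLt
    have hp2 : (partner j).val / 2 = j.val / 2 := by simp only [partner]; omega
    have hd1 : j.val / 2 < d₁ := by omega
    rcases Nat.mod_two_eq_zero_or_one j.val with h | h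
    · have hp : (partner j).val % 2 = 1 := by simp only [partner]; omega
      rw [if_pos h, if_neg (by omega)]
      have he : (⟨(partner j).val / 2, by have := (partner j).isLt; omega⟩ : Fin d₁) =
          ⟨j.val / 2, hd1⟩ := Fin.ext (by simp only [hp2])
      rw [he]; ring
    · have hp : (partner j).val % 2 = 0 := by simp only [partner]; omega
      rw [if_neg (by omega), if_pos hp]
      have he : (⟨(partner j).val / 2, by have := (partner j).isLt; omega⟩ : Fin d₁) =
          ⟨j.val / 2, hd1⟩ := Fin.ext (by simp only [hp2])
      rw [he]; ring
  · rw [Matrix.diagonal_apply_ne _ (Ne.symm hj)]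
    rw [skew_apply_ne η₂ (partner i) j
      (fun h => hj (by rw [h, partner_partner])), mul_zero]

end LCSaux

/-- Substituting `w = 2(Λᵀ)⁻¹μ` into the conditional characteristic function of the
Lévy area yields the joint characteristic function of Brownian motion coupled with its
Lévy area in the non-degenerate case. -/
theorem levy_char_substitution (d₁ : ℕ) (η : Fin d₁ → ℝ) (hη : ∀ k, 0 < η k)
    (O : Matrix (Fin (2 * d₁)) (Fin (2 * d₁)) ℝ) (hO : Oᵀ * O = 1)
    (Λ : Matrix (Fin (2 * d₁)) (Fin (2 * d₁)) ℝ)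
    (hΛ : Λ = Oᵀ * canonicalSkew (2 * d₁) d₁ η * O)
    (μ : Fin (2 * d₁) → ℝ) (t : ℝ)
    (w : Fin (2 * d₁) → ℝ) (hw : w = (2 : ℝ) • ((Λᵀ)⁻¹.mulVec μ)) :
    (∏ k : Fin d₁, (Real.cosh (η k * t / 2))⁻¹) *
      Real.exp (-∑ k : Fin d₁, (η k / 4) *
        ((O.mulVec w (idx0 k)) ^ 2 + (O.mulVec w (idx1 k)) ^ 2) *
        Real.tanh (η k * t / 2)) =
    (∏ k : Fin d₁, (Real.cosh (η k * t / 2))⁻¹) *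
      Real.exp (-∑ k : Fin d₁, (1 / η k) *
        ((O.mulVec μ (idx0 k)) ^ 2 + (O.mulVec μ (idx1 k)) ^ 2) *
        Real.tanh (η k * t / 2)) := by
  have hOOT : O * Oᵀ = 1 := mul_eq_one_comm.mp hO
  have hd : ∀ i : Fin (2 * d₁), i.val / 2 < d₁ := fun i => by have := i.isLt; omega
  set C := canonicalSkew (2 * d₁) d₁ (fun k => -η k) with hC
  set B := canonicalSkew (2 * d₁) d₁ (fun k => (η k)⁻¹) with hB
  have hΛT : Λᵀ = Oᵀ * C * O := by
    rw [hΛ, Matrix.transpose_mul, Matrix.transpose_mul, Matrix.transpose_transpose,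
      LCSaux.skew_transpose, ← hC, Matrix.mul_assoc]
  have h1 : C * B = 1 := by
    rw [hC, hB, LCSaux.skew_mul]
    ext i j
    rcases eq_or_ne i j with rfl | hij
    · rw [Matrix.diagonal_apply_eq, Matrix.one_apply_eq]
      have h := (hη ⟨i.val / 2, hd i⟩).ne'
      field_simp
    · rw [Matrix.diagonal_apply_ne _ hij, Matrix.one_apply_ne hij]
  have hinv : (Λᵀ)⁻¹ = Oᵀ * B * O := by
    apply Matrix.inv_eq_right_inv
    rw [hΛT]
    simp only [Matrix.mul_assoc]
    rw [← Matrix.mul_assoc O Oᵀ (B * O), hOOT, Matrix.one_mul,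
      ← Matrix.mul_assoc C B O, h1, Matrix.one_mul, hO]
  have hvw : O.mulVec w = fun i => 2 * B.mulVec (O.mulVec μ) i := by
    funext i
    rw [hw, hinv]
    rw [Matrix.mulVec_smul]
    have h2 : O.mulVec ((Oᵀ * B * O).mulVec μ) = B.mulVec (O.mulVec μ) := by
      rw [Matrix.mulVec_mulVec, ← Matrix.mul_assoc, ← Matrix.mul_assoc, hOOT,
        Matrix.one_mul, ← Matrix.mulVec_mulVec]
    rw [h2]
    simp
  set v := O.mulVec μ with hv
  have hw0 : ∀ k : Fin d₁, O.mulVec w (idx0 k) = 2 * (-(η k)⁻¹ * v (idx1 k)) := by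
    intro k
    rw [hvw]
    show 2 * ((canonicalSkew (2 * d₁) d₁ fun k => (η k)⁻¹) *ᵥ v) (idx0 k) = _
    rw [LCSaux.skew_mulVec_idx0]
  have hw1 : ∀ k : Fin d₁, O.mulVec w (idx1 k) = 2 * ((η k)⁻¹ * v (idx0 k)) := by
    intro k
    rw [hvw]
    show 2 * ((canonicalSkew (2 * d₁) d₁ fun k => (η k)⁻¹) *ᵥ v) (idx1 k) = _
    rw [LCSaux.skew_mulVec_idx1]
  congr 1
  congr 1
  congr 1
  apply Finset.sum_congr rfl
  intro k _
  rw [hw0 k, hw1 k]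
  have hk := (hη k).ne'
  field_simp
  ring
end
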